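/- Fix an integer n ≥ 2 and let B_n = {±e_i : 1 ≤ i ≤ n} ∪ {±e_i ± e_j : 1 ≤ i < j ≤ n} ⊆ ℝ^n. For a subset J ⊆ {1,…,n} let Ψ_J := {±e_i : 1 ≤ i ≤ n} ∪ {±e_i ± e_j : i ≠ j, and either both i,j ∈ J or both i,j ∉ J}. Then: (1) for every nonempty proper subset J ⊊ {1,…,n}, Ψ_J is a maximal root subsystem of B_n; (2) every maximal root subsystem Ψ of B_n with Ψ ∩ {±e_i : 1 ≤ i ≤ n} ≠ ∅ equals Ψ_J for some nonempty proper subset J ⊊ {1,…,n}. -/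

import Mathlib

open RealInnerProductSpace

set_option maxHeartbeats 1000000
noncomputable section

/-- The standard basis vector `e i` of `ℝ^n`. -/
def ee (n : ℕ) (i : Fin n) : EuclideanSpace ℝ (Fin n) := EuclideanSpace.single i 1

/-- The set `{±e_i : 1 ≤ i ≤ n}`. -/
def pmE (n : ℕ) : Set (EuclideanSpace ℝ (Fin n)) :=
  {v | ∃ i : Fin n, v = ee n i ∨ v = -ee n i}

/-- The set `{±e_i ± e_j : i ≠ j}`. -/
def pmEE (n : ℕ) : Set (EuclideanSpace ℝ (Fin n)) :=
  {v | ∃ i j : Fin n, i ≠ j ∧ ∃ ε δ : ℝ, (ε = 1 ∨ ε = -1) ∧ (δ = 1 ∨ δ = -1) ∧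
    v = ε • ee n i + δ • ee n j}

/-- The set `{±2e_i : 1 ≤ i ≤ n}`. -/
def pm2E (n : ℕ) : Set (EuclideanSpace ℝ (Fin n)) :=
  {v | ∃ i : Fin n, v = (2 : ℝ) • ee n i ∨ v = -((2 : ℝ) • ee n i)}

/-- The reflection `s_α(β) = β − (2⟨β,α⟩/⟨α,α⟩)α`. -/
def reflV {V : Type*} [NormedAddCommGroup V] [InnerProductSpace ℝ V] (α β : V) : V :=
  β - (2 * ⟪β, α⟫ / ⟪α, α⟫) • α

/-- A root subsystem of `Φ` (w.r.t. a given reflection map): a nonempty subset of `Φ`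
closed under the reflections in its own elements. -/
def IsRootSubsystem {X : Type*} (refl : X → X → X) (Φ Ψ : Set X) : Prop :=
  Ψ.Nonempty ∧ Ψ ⊆ Φ ∧ ∀ a ∈ Ψ, ∀ b ∈ Ψ, refl a b ∈ Ψ

/-- A maximal root subsystem of `Φ`: a proper root subsystem such that every root
subsystem `Ψ'` with `Ψ ⊆ Ψ' ≠ Φ` equals `Ψ`. -/
def IsMaximalRootSubsystem {X : Type*} (refl : X → X → X) (Φ Ψ : Set X) : Prop :=
  IsRootSubsystem refl Φ Ψ ∧ Ψ ≠ Φ ∧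
    ∀ Ψ' : Set X, IsRootSubsystem refl Φ Ψ' → Ψ ⊆ Ψ' → Ψ' ≠ Φ → Ψ' = Ψ

/-- The maximal root subsystem `Ψ_J` of `B_n`. -/
def PsiJ (n : ℕ) (J : Set (Fin n)) : Set (EuclideanSpace ℝ (Fin n)) :=
  pmE n ∪
    {v | ∃ i j : Fin n, i ≠ j ∧ ((i ∈ J ∧ j ∈ J) ∨ (i ∉ J ∧ j ∉ J)) ∧
      ∃ ε δ : ℝ, (ε = 1 ∨ ε = -1) ∧ (δ = 1 ∨ δ = -1) ∧ v = ε • ee n i + δ • ee n j}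

section Aux
variable {n : ℕ}

lemma ee_apply (i j : Fin n) : ee n i j = if j = i then 1 else 0 :=
  EuclideanSpace.single_apply i 1 j

lemma inner_ee (i j : Fin n) : ⟪ee n i, ee n j⟫ = if i = j then 1 else 0 := by
  simp [ee, EuclideanSpace.inner_single_left, EuclideanSpace.single_apply, eq_comm]

lemma reflV_add_right {V : Type*} [NormedAddCommGroup V] [InnerProductSpace ℝ V]
    (α β γ : V) : reflV α (β + γ) = reflV α β + reflV α γ := by
  simp only [reflV, inner_add_left]
  module

lemma reflV_smul_right {V : Type*} [NormedAddCommGroup V] [InnerProductSpace ℝ V]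
    (α β : V) (c : ℝ) : reflV α (c • β) = c • reflV α β := by
  simp only [reflV, real_inner_smul_left]
  module

lemma reflV_smul_left {V : Type*} [NormedAddCommGroup V] [InnerProductSpace ℝ V]
    (α β : V) (c : ℝ) (hc : c ≠ 0) : reflV (c • α) β = reflV α β := by
  simp only [reflV, real_inner_smul_right, real_inner_smul_left, smul_smul]
  congr 1
  rw [div_mul_eq_mul_div, show 2 * (c * ⟪β, α⟫) * c = (c*c) * (2 * ⟪β, α⟫) by ring,
    show c * (c * ⟪α, α⟫) = (c*c) * ⟪α, α⟫ by ring,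
    mul_div_mul_left _ _ (mul_ne_zero hc hc)]

lemma reflV_ee_ee (i k : Fin n) :
    reflV (ee n i) (ee n k) = if k = i then -(ee n i) else ee n k := by
  rcases eq_or_ne k i with h | h
  · subst h
    simp only [reflV, inner_ee, if_pos rfl]
    norm_num
    module
  · simp only [reflV, inner_ee, if_neg h, if_neg h]
    norm_num

lemma reflV_long_ee (a b k : Fin n) (hab : a ≠ b) (η : ℝ) (hη : η * η = 1) :
    reflV (ee n a + η • ee n b) (ee n k) =
      if k = a then (-η) • ee n b else if k = b then (-η) • ee n a else ee n k := by
  have hZ : ⟪ee n a + η • ee n b, ee n a + η • ee n b⟫ = 2 := by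
    simp [-PiLp.inner_apply, -inner_self_eq_norm_sq_to_K, inner_add_left, inner_add_right, real_inner_smul_left,
      real_inner_smul_right, inner_ee, hab, hab.symm]
    linear_combination hη
  rcases eq_or_ne k a with h | h
  · subst h
    have hX : ⟪ee n k, ee n k + η • ee n b⟫ = 1 := by
      simp [-PiLp.inner_apply, -inner_self_eq_norm_sq_to_K, inner_add_right, real_inner_smul_right, inner_ee, hab]
    simp only [reflV, hZ, hX, eq_self_iff_true, if_true]
    norm_num
  · rcases eq_or_ne k b with h2 | h2
    · subst h2
      have hX : ⟪ee n k, ee n a + η • ee n k⟫ = η := by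
        simp [-PiLp.inner_apply, -inner_self_eq_norm_sq_to_K, inner_add_right, real_inner_smul_right, inner_ee, h]
      simp only [reflV, hZ, hX, if_neg h, eq_self_iff_true, if_true]
      rw [show 2 * η / 2 = η by ring,
        show η • (ee n a + η • ee n k) = η • ee n a + ee n k by
          rw [smul_add, smul_smul, hη, one_smul], neg_smul]
      abel
    · have hX : ⟪ee n k, ee n a + η • ee n b⟫ = 0 := by
        simp [-PiLp.inner_apply, inner_add_right, real_inner_smul_right, inner_ee, h, h2]
      simp only [reflV, hZ, hX, if_neg h, if_neg h2]
      norm_num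

lemma sg_ne {σ : ℝ} (hσ : σ = 1 ∨ σ = -1) : σ ≠ 0 := by
  rcases hσ with rfl | rfl <;> norm_num

lemma sg_neg {σ : ℝ} (hσ : σ = 1 ∨ σ = -1) : -σ = 1 ∨ -σ = -1 := by
  rcases hσ with rfl | rfl <;> norm_num

lemma sg_mul {σ τ : ℝ} (hσ : σ = 1 ∨ σ = -1) (hτ : τ = 1 ∨ τ = -1) :
    σ * τ = 1 ∨ σ * τ = -1 := by
  rcases hσ with rfl | rfl <;> rcases hτ with rfl | rfl <;> norm_num

lemma mem_pmE_iff {v : EuclideanSpace ℝ (Fin n)} :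
    v ∈ pmE n ↔ ∃ i : Fin n, ∃ σ : ℝ, (σ = 1 ∨ σ = -1) ∧ v = σ • ee n i := by
  constructor
  · rintro ⟨i, rfl | rfl⟩
    · exact ⟨i, 1, Or.inl rfl, (one_smul ℝ _).symm⟩
    · exact ⟨i, -1, Or.inr rfl, (neg_one_smul ℝ _).symm⟩
  · rintro ⟨i, σ, hσ, rfl⟩
    rcases hσ with rfl | rfl
    · exact ⟨i, Or.inl (one_smul ℝ _)⟩
    · exact ⟨i, Or.inr (by rw [neg_one_smul])⟩

lemma long_decomp {ε δ : ℝ} (hε : ε = 1 ∨ ε = -1) (a b : Fin n) :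
    ε • ee n a + δ • ee n b = ε • (ee n a + (ε * δ) • ee n b) := by
  rcases hε with rfl | rfl <;> module

lemma reflV_long_left {ε δ : ℝ} (hε : ε = 1 ∨ ε = -1) (a b : Fin n)
    (β : EuclideanSpace ℝ (Fin n)) :
    reflV (ε • ee n a + δ • ee n b) β = reflV (ee n a + (ε * δ) • ee n b) β := by
  rw [long_decomp hε, reflV_smul_left _ _ _ (sg_ne hε)]

lemma reflV_comb (α : EuclideanSpace ℝ (Fin n)) (ε δ : ℝ) (k l : Fin n) :
    reflV α (ε • ee n k + δ • ee n l) =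
      ε • reflV α (ee n k) + δ • reflV α (ee n l) := by
  rw [reflV_add_right, reflV_smul_right, reflV_smul_right]

lemma short_mem_psiJ (J : Set (Fin n)) (i : Fin n) {σ : ℝ} (hσ : σ = 1 ∨ σ = -1) :
    σ • ee n i ∈ PsiJ n J :=
  Or.inl (mem_pmE_iff.2 ⟨i, σ, hσ, rfl⟩)

lemma long_mem_psiJ (J : Set (Fin n)) {i j : Fin n} {ε δ : ℝ} (hij : i ≠ j)
    (hside : i ∈ J ↔ j ∈ J) (hε : ε = 1 ∨ ε = -1) (hδ : δ = 1 ∨ δ = -1) :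
    ε • ee n i + δ • ee n j ∈ PsiJ n J :=
  Or.inr ⟨i, j, hij, by tauto, ε, δ, hε, hδ, rfl⟩

lemma psiJ_empty : PsiJ n (∅ : Set (Fin n)) = pmE n ∪ pmEE n := by
  have : {v : EuclideanSpace ℝ (Fin n) | ∃ i j : Fin n, i ≠ j ∧
      ((i ∈ (∅ : Set (Fin n)) ∧ j ∈ (∅ : Set (Fin n))) ∨
        (i ∉ (∅ : Set (Fin n)) ∧ j ∉ (∅ : Set (Fin n)))) ∧
      ∃ ε δ : ℝ, (ε = 1 ∨ ε = -1) ∧ (δ = 1 ∨ δ = -1) ∧ v = ε • ee n i + δ • ee n j}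
      = pmEE n := by
    ext v
    constructor
    · rintro ⟨i, j, hij, -, ε, δ, hε, hδ, rfl⟩
      exact ⟨i, j, hij, ε, δ, hε, hδ, rfl⟩
    · rintro ⟨i, j, hij, ε, δ, hε, hδ, rfl⟩
      exact ⟨i, j, hij, Or.inr ⟨Set.notMem_empty i, Set.notMem_empty j⟩,
        ε, δ, hε, hδ, rfl⟩
  rw [PsiJ, this]

lemma psiJ_subsystem (hn : 0 < n) (J : Set (Fin n)) :
    IsRootSubsystem reflV (pmE n ∪ pmEE n) (PsiJ n J) := by
  refine ⟨⟨ee n ⟨0, hn⟩, Or.inl ⟨⟨0, hn⟩, Or.inl rfl⟩⟩, ?_, ?_⟩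
  · rintro v (h | ⟨i, j, hij, -, ε, δ, hε, hδ, rfl⟩)
    · exact Or.inl h
    · exact Or.inr ⟨i, j, hij, ε, δ, hε, hδ, rfl⟩
  · intro a ha b hb
    rcases ha with haS | ⟨i, j, hij, hsij, ε, δ, hε, hδ, rfl⟩
    · -- a is short
      rcases mem_pmE_iff.1 haS with ⟨i, σ, hσ, rfl⟩
      rw [reflV_smul_left _ _ _ (sg_ne hσ)]
      rcases hb with hbS | ⟨k, l, hkl, hskl, ε, δ, hε, hδ, rfl⟩
      · rcases mem_pmE_iff.1 hbS with ⟨k, τ, hτ, rfl⟩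
        rw [reflV_smul_right, reflV_ee_ee]
        split_ifs with h
        · rw [smul_neg, ← neg_smul]
          exact short_mem_psiJ J i (sg_neg hτ)
        · exact short_mem_psiJ J k hτ
      · rw [reflV_comb, reflV_ee_ee, reflV_ee_ee]
        have hsklIff : k ∈ J ↔ l ∈ J := by tauto
        split_ifs with h1 h2 h2
        · exact absurd (h1.trans h2.symm) hkl
        · rw [smul_neg, ← neg_smul]
          subst h1
          exact long_mem_psiJ J hkl hsklIff (sg_neg hε) hδ
        · rw [smul_neg (δ), ← neg_smul]
          subst h2
          exact long_mem_psiJ J hkl hsklIff hε (sg_neg hδ)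
        · exact long_mem_psiJ J hkl hsklIff hε hδ
    · -- a is long
      have hsijIff : i ∈ J ↔ j ∈ J := by tauto
      rw [reflV_long_left hε]
      have hηpm : ε * δ = 1 ∨ ε * δ = -1 := sg_mul hε hδ
      have hη : (ε * δ) * (ε * δ) = 1 := by
        rcases hηpm with h | h <;> rw [h] <;> norm_num
      set η := ε * δ with hηdef
      rcases hb with hbS | ⟨k, l, hkl, hskl, ε', δ', hε', hδ', rfl⟩
      · rcases mem_pmE_iff.1 hbS with ⟨k, τ, hτ, rfl⟩
        rw [reflV_smul_right, reflV_long_ee _ _ _ hij _ hη]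
        split_ifs with h1 h2
        · rw [smul_smul]
          exact short_mem_psiJ J j (sg_mul hτ (sg_neg hηpm))
        · rw [smul_smul]
          exact short_mem_psiJ J i (sg_mul hτ (sg_neg hηpm))
        · exact short_mem_psiJ J k hτ
      · have hsklIff : k ∈ J ↔ l ∈ J := by tauto
        rw [reflV_comb, reflV_long_ee _ _ _ hij _ hη, reflV_long_ee _ _ _ hij _ hη]
        rcases eq_or_ne k i with rfl | hki
        · rw [if_pos rfl]
          rcases eq_or_ne l j with rfl | hlj
          · rw [if_neg (Ne.symm hij), if_pos rfl, smul_smul, smul_smul]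
            exact long_mem_psiJ J hij.symm hsijIff.symm
              (sg_mul hε' (sg_neg hηpm)) (sg_mul hδ' (sg_neg hηpm))
          · rw [if_neg hkl.symm, if_neg hlj, smul_smul]
            exact long_mem_psiJ J (fun h => hlj h.symm)
              (hsijIff.symm.trans hsklIff) (sg_mul hε' (sg_neg hηpm)) hδ'
        · rw [if_neg hki]
          rcases eq_or_ne k j with rfl | hkj
          · rw [if_pos rfl]
            rcases eq_or_ne l i with rfl | hli
            · rw [if_pos rfl, smul_smul, smul_smul]
              exact long_mem_psiJ J hij hsijIff
                (sg_mul hε' (sg_neg hηpm)) (sg_mul hδ' (sg_neg hηpm))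
            · rw [if_neg hli, if_neg (Ne.symm hkl), smul_smul]
              exact long_mem_psiJ J (fun h => hli h.symm) (hsijIff.trans hsklIff)
                (sg_mul hε' (sg_neg hηpm)) hδ'
          · rw [if_neg hkj]
            rcases eq_or_ne l i with rfl | hli
            · rw [if_pos rfl, smul_smul]
              exact long_mem_psiJ J hkj (hsklIff.trans hsijIff) hε'
                (sg_mul hδ' (sg_neg hηpm))
            · rcases eq_or_ne l j with rfl | hlj
              · rw [if_neg hli, if_pos rfl, smul_smul]
                exact long_mem_psiJ J hki (hsklIff.trans hsijIff.symm) hε'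
                  (sg_mul hδ' (sg_neg hηpm))
              · rw [if_neg hli, if_neg hlj]
                exact long_mem_psiJ J hkl hsklIff hε' hδ'

lemma sg_sq {σ : ℝ} (hσ : σ = 1 ∨ σ = -1) : σ * σ = 1 := by
  rcases hσ with rfl | rfl <;> norm_num

lemma smul_ee_apply (σ : ℝ) (k x : Fin n) :
    (σ • ee n k) x = if x = k then σ else 0 := by
  rw [PiLp.smul_apply, ee_apply, smul_eq_mul]
  split_ifs <;> ring

lemma comb_apply (ε δ : ℝ) (a b x : Fin n) :
    (ε • ee n a + δ • ee n b) x
      = (if x = a then ε else 0) + (if x = b then δ else 0) := by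
  rw [PiLp.add_apply, smul_ee_apply, smul_ee_apply]

lemma inner_self_short {σ : ℝ} (hσ : σ = 1 ∨ σ = -1) (i : Fin n) :
    ⟪σ • ee n i, σ • ee n i⟫ = 1 := by
  rw [real_inner_smul_left, real_inner_smul_right, inner_ee, if_pos rfl]
  rcases hσ with rfl | rfl <;> norm_num

lemma inner_self_long {ε δ : ℝ} (hε : ε = 1 ∨ ε = -1) (hδ : δ = 1 ∨ δ = -1)
    {a b : Fin n} (hab : a ≠ b) :
    ⟪ε • ee n a + δ • ee n b, ε • ee n a + δ • ee n b⟫ = 2 := by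
  simp only [inner_add_left, inner_add_right, real_inner_smul_left, real_inner_smul_right,
    inner_ee, if_pos rfl, if_neg hab, if_neg hab.symm]
  rcases hε with rfl | rfl <;> rcases hδ with rfl | rfl <;> norm_num

lemma reflV_self {V : Type*} [NormedAddCommGroup V] [InnerProductSpace ℝ V]
    {u : V} (h : ⟪u, u⟫ ≠ 0) : reflV u u = -u := by
  rw [reflV, mul_div_assoc, div_self h, mul_one]
  module

lemma inner_self_phi {v : EuclideanSpace ℝ (Fin n)} (hv : v ∈ pmE n ∪ pmEE n) :
    ⟪v, v⟫ ≠ 0 := by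
  rcases hv with h | ⟨a, b, hab, ε, δ, hε, hδ, rfl⟩
  · rcases mem_pmE_iff.1 h with ⟨i, σ, hσ, rfl⟩
    rw [inner_self_short hσ]; norm_num
  · rw [inner_self_long hε hδ hab]; norm_num

lemma neg_mem {Ψ : Set (EuclideanSpace ℝ (Fin n))}
    (hΨ : IsRootSubsystem reflV (pmE n ∪ pmEE n) Ψ)
    {u : EuclideanSpace ℝ (Fin n)} (hu : u ∈ Ψ) : -u ∈ Ψ := by
  have h := hΨ.2.2 u hu u hu
  rwa [reflV_self (inner_self_phi (hΨ.2.1 hu))] at h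

lemma short_norm {Ψ : Set (EuclideanSpace ℝ (Fin n))}
    (hΨ : IsRootSubsystem reflV (pmE n ∪ pmEE n) Ψ)
    {σ : ℝ} (hσ : σ = 1 ∨ σ = -1) {i : Fin n} (hu : σ • ee n i ∈ Ψ) :
    ee n i ∈ Ψ := by
  rcases hσ with rfl | rfl
  · rwa [one_smul] at hu
  · have := neg_mem hΨ hu
    rwa [neg_smul, one_smul, neg_neg] at this

lemma flip_left {Ψ' : Set (EuclideanSpace ℝ (Fin n))}
    (hcl : ∀ x ∈ Ψ', ∀ y ∈ Ψ', reflV x y ∈ Ψ')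
    {a b : Fin n} (hab : a ≠ b) (ha : ee n a ∈ Ψ') {ε δ : ℝ}
    (hu : ε • ee n a + δ • ee n b ∈ Ψ') : (-ε) • ee n a + δ • ee n b ∈ Ψ' := by
  have h := hcl _ ha _ hu
  rw [reflV_comb, reflV_ee_ee, reflV_ee_ee, if_pos rfl, if_neg hab.symm,
    smul_neg, ← neg_smul] at h
  exact h

lemma flip_right {Ψ' : Set (EuclideanSpace ℝ (Fin n))}
    (hcl : ∀ x ∈ Ψ', ∀ y ∈ Ψ', reflV x y ∈ Ψ')
    {a b : Fin n} (hab : a ≠ b) (hb : ee n b ∈ Ψ') {ε δ : ℝ}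
    (hu : ε • ee n a + δ • ee n b ∈ Ψ') : ε • ee n a + (-δ) • ee n b ∈ Ψ' := by
  have h := hcl _ hb _ hu
  rw [reflV_comb, reflV_ee_ee, reflV_ee_ee, if_neg hab, if_pos rfl,
    smul_neg, ← neg_smul] at h
  exact h

lemma allsigns {Ψ' : Set (EuclideanSpace ℝ (Fin n))}
    (hcl : ∀ x ∈ Ψ', ∀ y ∈ Ψ', reflV x y ∈ Ψ')
    {a b : Fin n} (hab : a ≠ b) (ha : ee n a ∈ Ψ') (hb : ee n b ∈ Ψ')
    {ε δ ε' δ' : ℝ} (hε : ε = 1 ∨ ε = -1) (hδ : δ = 1 ∨ δ = -1)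
    (hε' : ε' = 1 ∨ ε' = -1) (hδ' : δ' = 1 ∨ δ' = -1)
    (hu : ε • ee n a + δ • ee n b ∈ Ψ') : ε' • ee n a + δ' • ee n b ∈ Ψ' := by
  have hce : ε' = ε ∨ ε' = -ε := by
    rcases hε with rfl | rfl <;> rcases hε' with rfl | rfl <;> norm_num
  have hcd : δ' = δ ∨ δ' = -δ := by
    rcases hδ with rfl | rfl <;> rcases hδ' with rfl | rfl <;> norm_num
  rcases hce with rfl | rfl <;> rcases hcd with rfl | rfl
  · exact hu
  · exact flip_right hcl hab hb hu
  · exact flip_left hcl hab ha hu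
  · exact flip_left hcl hab ha (flip_right hcl hab hb hu)

lemma ind_move {Ψ' : Set (EuclideanSpace ℝ (Fin n))}
    (hcl : ∀ x ∈ Ψ', ∀ y ∈ Ψ', reflV x y ∈ Ψ')
    {a k b : Fin n} {η : ℝ} (hη : η = 1 ∨ η = -1)
    (hα : (1:ℝ) • ee n a + η • ee n k ∈ Ψ')
    (hu : (1:ℝ) • ee n a + (1:ℝ) • ee n b ∈ Ψ')
    (hak : a ≠ k) (hba : b ≠ a) (hbk : b ≠ k) :
    (-η) • ee n k + (1:ℝ) • ee n b ∈ Ψ' := by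
  have h := hcl _ hα _ hu
  rw [reflV_long_left (Or.inl rfl) a k, one_mul, reflV_comb,
    reflV_long_ee a k a hak η (sg_sq hη), reflV_long_ee a k b hak η (sg_sq hη),
    if_pos rfl, if_neg hba, if_neg hbk, one_smul, one_smul, ← one_smul ℝ (ee n b)] at h
  exact h

lemma long_index {Ψ : Set (EuclideanSpace ℝ (Fin n))}
    (hΨ : IsRootSubsystem reflV (pmE n ∪ pmEE n) Ψ)
    {a b : Fin n} (hab : a ≠ b) {ε δ : ℝ} (hε : ε = 1 ∨ ε = -1) (hδ : δ = 1 ∨ δ = -1)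
    (hu : ε • ee n a + δ • ee n b ∈ Ψ) (ha : ee n a ∈ Ψ) : ee n b ∈ Ψ := by
  have h := hΨ.2.2 _ hu _ ha
  rw [reflV_long_left hε, reflV_long_ee a b a hab _ (sg_sq (sg_mul hε hδ)),
    if_pos rfl] at h
  exact short_norm hΨ (sg_neg (sg_mul hε hδ)) h

lemma cross_not_mem_psiJ {J : Set (Fin n)} {i j : Fin n} (hiJ : i ∈ J) (hjJ : j ∉ J)
    (hij : i ≠ j) {ε δ : ℝ} (hε : ε = 1 ∨ ε = -1) (hδ : δ = 1 ∨ δ = -1) :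
    ε • ee n i + δ • ee n j ∉ PsiJ n J := by
  rintro (hS | ⟨k, l, hkl, hskl, ε', δ', hε', hδ', heq⟩)
  · rcases mem_pmE_iff.1 hS with ⟨k, σ, hσ, heq⟩
    have hi : (ε • ee n i + δ • ee n j) i = (σ • ee n k) i := by rw [heq]
    have hj : (ε • ee n i + δ • ee n j) j = (σ • ee n k) j := by rw [heq]
    rw [comb_apply, smul_ee_apply, if_pos rfl, if_neg hij, add_zero] at hi
    rw [comb_apply, smul_ee_apply, if_neg hij.symm, if_pos rfl, zero_add] at hj
    rcases eq_or_ne i k with rfl | h1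
    · rw [if_neg (fun h : j = i => hij h.symm)] at hj
      exact sg_ne hδ hj
    · rw [if_neg h1] at hi
      exact sg_ne hε hi
  · have hi : (ε • ee n i + δ • ee n j) i = (ε' • ee n k + δ' • ee n l) i := by rw [heq]
    have hj : (ε • ee n i + δ • ee n j) j = (ε' • ee n k + δ' • ee n l) j := by rw [heq]
    rw [comb_apply, comb_apply, if_pos rfl, if_neg hij, add_zero] at hi
    rw [comb_apply, comb_apply, if_neg hij.symm, if_pos rfl, zero_add] at hj
    rcases eq_or_ne i k with rfl | hik
    · rcases eq_or_ne j l with rfl | hjl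
      · tauto
      · rw [if_neg (fun h : j = i => hij h.symm), if_neg hjl, add_zero] at hj
        exact sg_ne hδ hj
    · rcases eq_or_ne i l with rfl | hil
      · rcases eq_or_ne j k with rfl | hjk
        · tauto
        · rw [if_neg hjk, if_neg (fun h : j = i => hij h.symm), add_zero] at hj
          exact sg_ne hδ hj
      · rw [if_neg hik, if_neg hil, add_zero] at hi
        exact sg_ne hε hi

lemma psiJ_ne {J : Set (Fin n)} {i j : Fin n} (hiJ : i ∈ J) (hjJ : j ∉ J) :
    PsiJ n J ≠ pmE n ∪ pmEE n := by
  have hij : i ≠ j := fun h => hjJ (h ▸ hiJ)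
  intro h
  have hv : (1:ℝ) • ee n i + (1:ℝ) • ee n j ∈ PsiJ n J := by
    rw [h]
    exact Or.inr ⟨i, j, hij, 1, 1, Or.inl rfl, Or.inl rfl, rfl⟩
  exact cross_not_mem_psiJ hiJ hjJ hij (Or.inl rfl) (Or.inl rfl) hv

lemma gen {J : Set (Fin n)} {Ψ' : Set (EuclideanSpace ℝ (Fin n))}
    (hcl : ∀ x ∈ Ψ', ∀ y ∈ Ψ', reflV x y ∈ Ψ') (hPsi : PsiJ n J ⊆ Ψ')
    {a b : Fin n} (haJ : a ∈ J) (hbJ : b ∉ J) {ε δ : ℝ}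
    (hε : ε = 1 ∨ ε = -1) (hδ : δ = 1 ∨ δ = -1)
    (hv : ε • ee n a + δ • ee n b ∈ Ψ') :
    ∀ k ∈ J, ∀ l ∉ J, ∀ ε' δ' : ℝ, (ε' = 1 ∨ ε' = -1) → (δ' = 1 ∨ δ' = -1) →
      ε' • ee n k + δ' • ee n l ∈ Ψ' := by
  have hshort : ∀ m : Fin n, ee n m ∈ Ψ' := fun m => hPsi (Or.inl ⟨m, Or.inl rfl⟩)
  have hab : a ≠ b := fun h => hbJ (h ▸ haJ)
  have h1 : (1:ℝ) • ee n a + (1:ℝ) • ee n b ∈ Ψ' :=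
    allsigns hcl hab (hshort a) (hshort b) hε hδ (Or.inl rfl) (Or.inl rfl) hv
  intro k hk l hl ε' δ' hε' hδ'
  have hkb : k ≠ b := fun h => hbJ (h ▸ hk)
  have hkl : k ≠ l := fun h => hl (h ▸ hk)
  have h2 : (1:ℝ) • ee n k + (1:ℝ) • ee n b ∈ Ψ' := by
    rcases eq_or_ne k a with rfl | hka
    · exact h1
    · have hα : (1:ℝ) • ee n a + (-1:ℝ) • ee n k ∈ Ψ' :=
        hPsi (long_mem_psiJ J (Ne.symm hka) (iff_of_true haJ hk) (Or.inl rfl) (Or.inr rfl))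
      have h := ind_move hcl (Or.inr rfl) hα h1 (Ne.symm hka) hab.symm hkb.symm
      rwa [show -(-1:ℝ) = 1 from by norm_num] at h
  rcases eq_or_ne l b with rfl | hlb
  · exact allsigns hcl hkl (hshort k) (hshort l) (Or.inl rfl) (Or.inl rfl) hε' hδ' h2
  · have h2' : (1:ℝ) • ee n b + (1:ℝ) • ee n k ∈ Ψ' := by rw [add_comm]; exact h2
    have hbl : b ≠ l := fun h => hlb h.symm
    have hα : (1:ℝ) • ee n b + (-1:ℝ) • ee n l ∈ Ψ' :=
      hPsi (long_mem_psiJ J hbl (iff_of_false hbJ hl) (Or.inl rfl) (Or.inr rfl))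
    have h := ind_move hcl (Or.inr rfl) hα h2' hbl hkb hkl
    rw [show -(-1:ℝ) = 1 from by norm_num] at h
    have h3 : (1:ℝ) • ee n k + (1:ℝ) • ee n l ∈ Ψ' := by rw [add_comm]; exact h
    exact allsigns hcl hkl (hshort k) (hshort l) (Or.inl rfl) (Or.inl rfl) hε' hδ' h3

lemma psiJ_max (hn : 0 < n) {J : Set (Fin n)} (hJne : J.Nonempty) (hJu : J ≠ Set.univ) :
    IsMaximalRootSubsystem reflV (pmE n ∪ pmEE n) (PsiJ n J) := by
  obtain ⟨i, hiJ⟩ := hJne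
  obtain ⟨j, hjJ⟩ := (Set.ne_univ_iff_exists_notMem J).1 hJu
  refine ⟨psiJ_subsystem hn J, psiJ_ne hiJ hjJ, ?_⟩
  intro Ψ' hΨ' hsub hneΦ
  by_contra hne2
  obtain ⟨v, hvΨ', hvP⟩ :=
    Set.not_subset.1 (fun h => hne2 (Set.Subset.antisymm h hsub))
  rcases hΨ'.2.1 hvΨ' with hS | ⟨a, b, hab, ε, δ, hε, hδ, rfl⟩
  · exact hvP (Or.inl hS)
  have hcross : (a ∈ J ∧ b ∉ J) ∨ (a ∉ J ∧ b ∈ J) := by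
    by_contra hc
    exact hvP (Or.inr ⟨a, b, hab, by tauto, ε, δ, hε, hδ, rfl⟩)
  have hgen : ∀ k ∈ J, ∀ l ∉ J, ∀ ε' δ' : ℝ, (ε' = 1 ∨ ε' = -1) → (δ' = 1 ∨ δ' = -1) →
      ε' • ee n k + δ' • ee n l ∈ Ψ' := by
    rcases hcross with ⟨ha, hb⟩ | ⟨ha, hb⟩
    · exact gen hΨ'.2.2 hsub ha hb hε hδ hvΨ'
    · exact gen hΨ'.2.2 hsub hb ha hδ hε (by rw [add_comm]; exact hvΨ')
  apply hneΦ
  apply Set.Subset.antisymm hΨ'.2.1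
  rintro w (hwS | ⟨k, l, hkl, ε', δ', hε', hδ', rfl⟩)
  · exact hsub (Or.inl hwS)
  · by_cases hside : (k ∈ J ∧ l ∈ J) ∨ (k ∉ J ∧ l ∉ J)
    · exact hsub (Or.inr ⟨k, l, hkl, hside, ε', δ', hε', hδ', rfl⟩)
    · have h : (k ∈ J ∧ l ∉ J) ∨ (k ∉ J ∧ l ∈ J) := by tauto
      rcases h with ⟨h1, h2⟩ | ⟨h1, h2⟩
      · exact hgen k h1 l h2 ε' δ' hε' hδ'
      · rw [add_comm]
        exact hgen l h2 k h1 δ' ε' hδ' hε'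

/-- Two indices are linked if the corresponding long root (with `+` signs) lies in `Ψ`. -/
def Rl (Ψ : Set (EuclideanSpace ℝ (Fin n))) (x y : Fin n) : Prop :=
  x ≠ y ∧ (1:ℝ) • ee n x + (1:ℝ) • ee n y ∈ Ψ

lemma Rl_symm {Ψ : Set (EuclideanSpace ℝ (Fin n))} {x y : Fin n}
    (h : Rl Ψ x y) : Rl Ψ y x :=
  ⟨h.1.symm, by rw [add_comm]; exact h.2⟩

lemma Rl_norm {Ψ : Set (EuclideanSpace ℝ (Fin n))}
    (hcl : ∀ x ∈ Ψ, ∀ y ∈ Ψ, reflV x y ∈ Ψ) (hshort : ∀ m : Fin n, ee n m ∈ Ψ)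
    {x y : Fin n} (hxy : x ≠ y) {ε δ : ℝ} (hε : ε = 1 ∨ ε = -1) (hδ : δ = 1 ∨ δ = -1)
    (h : ε • ee n x + δ • ee n y ∈ Ψ) : Rl Ψ x y :=
  ⟨hxy, allsigns hcl hxy (hshort x) (hshort y) hε hδ (Or.inl rfl) (Or.inl rfl) h⟩

lemma Rl_all {Ψ : Set (EuclideanSpace ℝ (Fin n))}
    (hcl : ∀ x ∈ Ψ, ∀ y ∈ Ψ, reflV x y ∈ Ψ) (hshort : ∀ m : Fin n, ee n m ∈ Ψ)
    {x y : Fin n} (h : Rl Ψ x y) {ε δ : ℝ} (hε : ε = 1 ∨ ε = -1) (hδ : δ = 1 ∨ δ = -1) :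
    ε • ee n x + δ • ee n y ∈ Ψ :=
  allsigns hcl h.1 (hshort x) (hshort y) (Or.inl rfl) (Or.inl rfl) hε hδ h.2

lemma Rl_trans {Ψ : Set (EuclideanSpace ℝ (Fin n))}
    (hcl : ∀ x ∈ Ψ, ∀ y ∈ Ψ, reflV x y ∈ Ψ) (hshort : ∀ m : Fin n, ee n m ∈ Ψ)
    {x k y : Fin n} (h1 : Rl Ψ x k) (h2 : Rl Ψ k y) (hxy : x ≠ y) : Rl Ψ x y := by
  have hα : (1:ℝ) • ee n k + (1:ℝ) • ee n x ∈ Ψ := (Rl_symm h1).2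
  have h := ind_move hcl (Or.inl rfl) hα h2.2 h1.1.symm h2.1.symm hxy.symm
  exact Rl_norm hcl hshort hxy (Or.inr (by norm_num)) (Or.inl rfl) h

end Aux

/-- For `n ≥ 2` and `B_n = {±e_i} ∪ {±e_i ± e_j : i < j}`:
(1) for every nonempty proper `J ⊊ {1,…,n}`, `Ψ_J` is a maximal root subsystem of `B_n`;
(2) every maximal root subsystem of `B_n` meeting `{±e_i}` equals some `Ψ_J`. -/
theorem stmt_2 (n : ℕ) (hn : 2 ≤ n) :
    (∀ J : Set (Fin n), J.Nonempty → J ≠ Set.univ →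
      IsMaximalRootSubsystem reflV (pmE n ∪ pmEE n) (PsiJ n J)) ∧
    (∀ Ψ : Set (EuclideanSpace ℝ (Fin n)),
      IsMaximalRootSubsystem reflV (pmE n ∪ pmEE n) Ψ →
      (Ψ ∩ pmE n).Nonempty →
      ∃ J : Set (Fin n), J.Nonempty ∧ J ≠ Set.univ ∧ Ψ = PsiJ n J) := by
  have hn0 : 0 < n := lt_of_lt_of_le (by norm_num) hn
  constructor
  · exact fun J hJne hJu => psiJ_max hn0 hJne hJu
  · intro Ψ hmax hmeet
    obtain ⟨hsub, hneΦ, hmaxP⟩ := hmax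
    obtain ⟨u, huΨ, huE⟩ := hmeet
    have hcl := hsub.2.2
    rcases mem_pmE_iff.1 huE with ⟨i0, σ, hσ, rfl⟩
    have hi0 : ee n i0 ∈ Ψ := short_norm hsub hσ huΨ
    by_cases hKu : {i : Fin n | ee n i ∈ Ψ} = Set.univ
    · -- all short roots lie in Ψ
      have hshort : ∀ m : Fin n, ee n m ∈ Ψ := fun m => by
        have : m ∈ {i : Fin n | ee n i ∈ Ψ} := hKu ▸ Set.mem_univ m
        exact this
      obtain ⟨v, hvΦ, hvΨ⟩ :=
        Set.not_subset.1 (fun h => hneΦ (Set.Subset.antisymm hsub.2.1 h))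
      rcases hvΦ with hS | ⟨p, q, hpq, ε, δ, hε, hδ, rfl⟩
      · exfalso
        rcases mem_pmE_iff.1 hS with ⟨m, σ', hσ', rfl⟩
        rcases hσ' with rfl | rfl
        · exact hvΨ (by rw [one_smul]; exact hshort m)
        · refine hvΨ ?_
          rw [neg_smul, one_smul]
          exact neg_mem hsub (hshort m)
      · have hRpq : ¬ Rl Ψ p q := fun h => hvΨ (Rl_all hcl hshort h hε hδ)
        have hpJ : p ∈ {x : Fin n | x = p ∨ Rl Ψ x p} := Or.inl rfl
        have hqJ : q ∉ {x : Fin n | x = p ∨ Rl Ψ x p} := by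
          rintro (rfl | hR)
          · exact hpq rfl
          · exact hRpq (Rl_symm hR)
        refine ⟨{x : Fin n | x = p ∨ Rl Ψ x p}, ⟨p, hpJ⟩,
          fun h => hqJ (h ▸ Set.mem_univ q), ?_⟩
        have hsubJ : Ψ ⊆ PsiJ n {x : Fin n | x = p ∨ Rl Ψ x p} := by
          intro w hw
          rcases hsub.2.1 hw with hS | ⟨x, y, hxy, ε', δ', hε', hδ', rfl⟩
          · exact Or.inl hS
          · have hRxy : Rl Ψ x y := Rl_norm hcl hshort hxy hε' hδ' hw
            have hside : x ∈ {x : Fin n | x = p ∨ Rl Ψ x p}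
                ↔ y ∈ {x : Fin n | x = p ∨ Rl Ψ x p} := by
              constructor
              · rintro (rfl | hR)
                · exact Or.inr (Rl_symm hRxy)
                · rcases eq_or_ne y p with rfl | hyp
                  · exact Or.inl rfl
                  · exact Or.inr (Rl_trans hcl hshort (Rl_symm hRxy) hR hyp)
              · rintro (rfl | hR)
                · exact Or.inr hRxy
                · rcases eq_or_ne x p with rfl | hxp
                  · exact Or.inl rfl
                  · exact Or.inr (Rl_trans hcl hshort hRxy hR hxp)
            exact long_mem_psiJ _ hxy hside hε' hδ'
        exact (hmaxP _ (psiJ_subsystem hn0 _) hsubJ (psiJ_ne hpJ hqJ)).symm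
    · obtain ⟨j, hjK⟩ := (Set.ne_univ_iff_exists_notMem _).1 hKu
      refine ⟨{i : Fin n | ee n i ∈ Ψ}, ⟨i0, hi0⟩, hKu, ?_⟩
      have hsubK : Ψ ⊆ PsiJ n {i : Fin n | ee n i ∈ Ψ} := by
        intro w hw
        rcases hsub.2.1 hw with hS | ⟨x, y, hxy, ε', δ', hε', hδ', rfl⟩
        · exact Or.inl hS
        · have hside : x ∈ {i : Fin n | ee n i ∈ Ψ} ↔ y ∈ {i : Fin n | ee n i ∈ Ψ} := by
            constructor
            · intro hx
              exact long_index hsub hxy hε' hδ' hw hx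
            · intro hy
              exact long_index hsub hxy.symm hδ' hε' (by rw [add_comm]; exact hw) hy
          exact long_mem_psiJ _ hxy hside hε' hδ'
      exact (hmaxP _ (psiJ_subsystem hn0 _) hsubK (psiJ_ne hi0 hjK)).symm
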